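/- arXiv:2103.08391 — 3 statements merged into one kernel-verified Lean document; each statement's English description precedes it below -/
import Mathlib

section
/- If a policy π solves a FOND+ problem ⟨P, C⟩, then π is a strong-cyclic solution of the underlying FOND problem P (i.e., if π were not strong-cyclic, one could construct a maximal, non-goal-reaching π-trajectory that is fair for ⟨P, C⟩). -/
namespace FondPaper

/-- A FOND model: initial state, goal states, and transition function
`F a s` giving the set of possible successor states of action `a` in state `s`. -/
structure FOND (S A : Type) where
  init : S
  goal : Set S
  F : A → S → Set S

variable {S A V : Type}

/-- Action `a` is applicable in `s` iff it has some successor. -/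
def FOND.Applicable (P : FOND S A) (a : A) (s : S) : Prop := (P.F a s).Nonempty

/-- A policy is a partial function mapping non-goal states into actions. -/
def IsPolicy (P : FOND S A) (π : S → Option A) : Prop := ∀ s ∈ P.goal, π s = none

/-- A (finite or infinite) trajectory: `len = some n` means the trajectory is
`states 0, …, states n`; `len = none` means it is infinite. -/
structure Traj (S : Type) where
  states : ℕ → S
  len : Option ℕ

/-- Index `i` is within the trajectory. -/
def Traj.Inside (τ : Traj S) (i : ℕ) : Prop := ∀ n, τ.len = some n → i ≤ n

/-- There is a step from index `i` to `i+1` in the trajectory. -/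
def Traj.HasStep (τ : Traj S) (i : ℕ) : Prop := ∀ n, τ.len = some n → i < n

/-- `τ` is a π-trajectory of `P`. -/
def IsTraj (P : FOND S A) (π : S → Option A) (τ : Traj S) : Prop :=
  τ.states 0 = P.init ∧
  ∀ i, τ.HasStep i → ∃ a, π (τ.states i) = some a ∧ τ.states (i + 1) ∈ P.F a (τ.states i)

/-- Maximal trajectory: infinite, or finite ending in the first goal state,
or in a state where the policy is undefined or prescribes an inapplicable action. -/
def MaximalTraj (P : FOND S A) (π : S → Option A) (τ : Traj S) : Prop :=
  τ.len = none ∨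
  ∃ n, τ.len = some n ∧
    ((τ.states n ∈ P.goal ∧ ∀ i < n, τ.states i ∉ P.goal) ∨
     π (τ.states n) = none ∨
     (∃ a, π (τ.states n) = some a ∧ ¬ P.Applicable a (τ.states n)))

/-- The trajectory reaches a goal state. -/
def ReachesGoal (P : FOND S A) (τ : Traj S) : Prop :=
  ∃ i, τ.Inside i ∧ τ.states i ∈ P.goal

/-- `s` is recurrent in `τ`: the trajectory is infinite and `s` occurs infinitely often. -/
def RecurrentIn (τ : Traj S) (s : S) : Prop :=
  τ.len = none ∧ {i | τ.states i = s}.Infinite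

/-- One policy step: `s'` is a possible successor of `s` under the policy. -/
def PStep (P : FOND S A) (π : S → Option A) (s s' : S) : Prop :=
  ∃ a, π s = some a ∧ s' ∈ P.F a s

/-- The policy reaches `s'` from `s`. -/
def ReachesFrom (P : FOND S A) (π : S → Option A) : S → S → Prop :=
  Relation.ReflTransGen (PStep P π)

/-- `s` is reached by the policy: some finite π-trajectory ends at `s`. -/
def ReachedBy (P : FOND S A) (π : S → Option A) (s : S) : Prop :=
  ∃ τ : Traj S, IsTraj P π τ ∧ ∃ n, τ.len = some n ∧ τ.states n = s

/-- Strong-cyclic solution: a goal is reachable via π from every state reached by π. -/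
def StrongCyclic (P : FOND S A) (π : S → Option A) : Prop :=
  ∀ s, ReachedBy P π s → ∃ g ∈ P.goal, ReachesFrom P π s g

/-- Strong solution: every maximal π-trajectory reaches a goal state. -/
def Strong (P : FOND S A) (π : S → Option A) : Prop :=
  ∀ τ : Traj S, IsTraj P π τ → MaximalTraj P π τ → ReachesGoal P τ

/-- Fairness when all actions are fair: each recurrent state is immediately
followed by each of its possible successors infinitely often.
(Finite trajectories have no recurrent states, hence are fair.) -/
def FairAll (P : FOND S A) (π : S → Option A) (τ : Traj S) : Prop :=
  ∀ s, RecurrentIn τ s → ∀ a, π s = some a → ∀ s' ∈ P.F a s,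
    {i | τ.states i = s ∧ τ.states (i + 1) = s'}.Infinite

/-- The policy is acyclic: no π-trajectory visits the same state more than once. -/
def AcyclicPolicy (P : FOND S A) (π : S → Option A) : Prop :=
  ∀ τ : Traj S, IsTraj P π τ → ∀ i j, τ.Inside i → τ.Inside j →
    τ.states i = τ.states j → i = j

/-- The non-deterministic actions of `P`: those with at least two possible
successors in some state. -/
def NonDetActs (P : FOND S A) : Set A :=
  {a | ∃ s s₁ s₂, s₁ ∈ P.F a s ∧ s₂ ∈ P.F a s ∧ s₁ ≠ s₂}

/-- The occurrence of the action `π s` at recurrent state `s` of trajectory `τ`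
is fair: for some constraint `(A, B) ∈ C`, `π s ∈ A` and actions from `B`
occur only finitely often along `τ`. -/
def FairOcc (C : Set (Set A × Set A)) (π : S → Option A) (τ : Traj S) (s : S) : Prop :=
  ∃ c ∈ C, (∃ a, π s = some a ∧ a ∈ c.1) ∧
    ∀ b ∈ c.2, {i | π (τ.states i) = some b}.Finite

/-- `τ` is fair for the FOND+ problem `⟨P, C⟩`. -/
def FairPlus (P : FOND S A) (C : Set (Set A × Set A)) (π : S → Option A) (τ : Traj S) : Prop :=
  ∀ s, RecurrentIn τ s → FairOcc C π τ s → ∀ a, π s = some a → ∀ s' ∈ P.F a s,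
    {i | τ.states i = s ∧ τ.states (i + 1) = s'}.Infinite

/-- `π` solves the FOND+ problem `⟨P, C⟩`. -/
def SolvesPlus (P : FOND S A) (C : Set (Set A × Set A)) (π : S → Option A) : Prop :=
  ∀ τ : Traj S, IsTraj P π τ → MaximalTraj P π τ → FairPlus P C π τ → ReachesGoal P τ

/-- Well-formed set of fairness constraints: finite, each `A`-part a set of
non-deterministic actions and each `B`-part disjoint from the `A`-part. -/
def WellFormedC (P : FOND S A) (C : Set (Set A × Set A)) : Prop :=
  C.Finite ∧ ∀ c ∈ C, c.1 ⊆ NonDetActs P ∧ Disjoint c.1 c.2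

/-- A cycle on `s` w.r.t. policy `π`: a sequence `s = t 0, …, t k = s` with `k ≥ 1`,
each `t i` (`i < k`) non-goal with `π` defined and `t (i+1)` a possible successor. -/
def CycleOn (P : FOND S A) (π : S → Option A) (s : S) (t : ℕ → S) (k : ℕ) : Prop :=
  1 ≤ k ∧ t 0 = s ∧ t k = s ∧
    ∀ i < k, t i ∉ P.goal ∧ ∃ a, π (t i) = some a ∧ t (i + 1) ∈ P.F a (t i)

/-- `s` is fair-for-`T`: for some `(A, B) ∈ C`, `π s ∈ A` and every cycle on `s`
containing a state where `π` prescribes a `B`-action also contains a state in `T`. -/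
def FairFor (P : FOND S A) (C : Set (Set A × Set A)) (π : S → Option A)
    (T : Set S) (s : S) : Prop :=
  ∃ c ∈ C, (∃ a, π s = some a ∧ a ∈ c.1) ∧
    ∀ t k, CycleOn P π s t k →
      (∃ i ≤ k, ∃ b, π (t i) = some b ∧ b ∈ c.2) → ∃ j ≤ k, t j ∈ T

/-- `T` is closed under the FOND+ termination rules. -/
def TermClosed (P : FOND S A) (C : Set (Set A × Set A)) (π : S → Option A) (T : Set S) : Prop :=
  P.goal ⊆ T ∧
  (∀ s a, π s = some a → FairFor P C π T s → (∃ s' ∈ P.F a s, s' ∈ T) → s ∈ T) ∧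
  (∀ s a, π s = some a → ¬ FairFor P C π T s → (P.F a s).Nonempty →
    (∀ s' ∈ P.F a s, s' ∈ T) → s ∈ T)

/-- `s` is terminating for `π` in `⟨P, C⟩`: it belongs to the least set closed
under the FOND+ termination rules. -/
def Terminating (P : FOND S A) (C : Set (Set A × Set A)) (π : S → Option A) (s : S) : Prop :=
  ∀ T : Set S, TermClosed P C π T → s ∈ T

/-- The operator `Φ` of the FOND+ termination computation. -/
def Phi (P : FOND S A) (C : Set (Set A × Set A)) (π : S → Option A) (T : Set S) : Set S :=
  P.goal ∪
  {s | ∃ a, π s = some a ∧ FairFor P C π T s ∧ ∃ s' ∈ P.F a s, s' ∈ T} ∪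
  {s | ∃ a, π s = some a ∧ (P.F a s).Nonempty ∧ P.F a s ⊆ T}

/-- The policy graph of `P` and `π`: edges `(s, s')` for non-goal reachable `s`
with `π s` defined and `s'` a possible successor. -/
def PolicyEdges (P : FOND S A) (π : S → Option A) : Set (S × S) :=
  {e | ReachesFrom P π P.init e.1 ∧ e.1 ∉ P.goal ∧ PStep P π e.1 e.2}

/-- Path (of length ≥ 0) in a graph given by its edge set. -/
def GPath (G : Set (S × S)) : S → S → Prop :=
  Relation.ReflTransGen (fun x y => (x, y) ∈ G)

/-- Edge `e = (s, s')` of `G` is removable by Sieve: `π s` decrements some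
variable `x` not incremented at any state lying on a path in `G` from `s'` back to `s`. -/
def Removable (π : S → Option A) (decs incs : A → Set V) (G : Set (S × S)) (e : S × S) : Prop :=
  e ∈ G ∧ ∃ x : V, (∃ a, π e.1 = some a ∧ x ∈ decs a) ∧
    ∀ w, GPath G e.2 w → GPath G w e.1 → ∀ a, π w = some a → x ∉ incs a

/-- One Sieve edge-removal step. -/
def SieveStep (π : S → Option A) (decs incs : A → Set V) (G G' : Set (S × S)) : Prop :=
  ∃ e, Removable π decs incs G e ∧ G' = G \ {e}

/-- Graph acyclicity: no nonempty path from a state back to itself. -/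
def GAcyclic (G : Set (S × S)) : Prop :=
  ∀ s s', (s, s') ∈ G → ¬ GPath G s' s

/-- A cycle on `s` in a graph given by its edge set. -/
def ECycleOn (E : Set (S × S)) (s : S) (t : ℕ → S) (k : ℕ) : Prop :=
  1 ≤ k ∧ t 0 = s ∧ t k = s ∧ ∀ i < k, (t i, t (i + 1)) ∈ E

/-- `T` is closed under the QNP termination rules. -/
def QNPClosed (P : FOND S A) (π : S → Option A) (decs incs : A → Set V) (T : Set S) : Prop :=
  ∀ s, ReachesFrom P π P.init s →
    ((¬ ∃ t k, ECycleOn (PolicyEdges P π) s t k) ∨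
     (∀ t k, ECycleOn (PolicyEdges P π) s t k → ∃ j ≤ k, t j ∈ T) ∨
     (∃ x, (∃ a, π s = some a ∧ x ∈ decs a) ∧
        ∀ t k, ECycleOn (PolicyEdges P π) s t k →
          (∃ i ≤ k, ∃ a, π (t i) = some a ∧ x ∈ incs a) → ∃ j ≤ k, t j ∈ T)) →
    s ∈ T

/-- `s` is QNP-terminating: it belongs to the least set closed under the QNP
termination rules. -/
def QNPTerm (P : FOND S A) (π : S → Option A) (decs incs : A → Set V) (s : S) : Prop :=
  ∀ T : Set S, QNPClosed P π decs incs T → s ∈ T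

/-- `T` is closed under the Dual-FOND termination rules. -/
def DualClosed (P : FOND S A) (fair : A → Prop) (π : S → Option A) (T : Set S) : Prop :=
  P.goal ⊆ T ∧
  (∀ s a, π s = some a → fair a → (∃ s' ∈ P.F a s, s' ∈ T) → s ∈ T) ∧
  (∀ s a, π s = some a → ¬ fair a → (P.F a s).Nonempty →
    (∀ s' ∈ P.F a s, s' ∈ T) → s ∈ T)

/-- `s` is Dual-FOND terminating. -/
def DualTerm (P : FOND S A) (fair : A → Prop) (π : S → Option A) (s : S) : Prop :=
  ∀ T : Set S, DualClosed P fair π T → s ∈ T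

/-- `π` solves the Dual FOND problem `(P, fair)`. -/
def SolvesDual [Fintype S] (P : FOND S A) (fair : A → Prop) (π : S → Option A) : Prop :=
  (∀ s, ReachedBy P π s → s ∉ P.goal → ∃ a, π s = some a ∧ (P.F a s).Nonempty) ∧
  ∃ d : S → ℕ,
    (∀ s, ReachedBy P π s → d s ≤ Fintype.card S) ∧
    (∀ s, ReachedBy P π s → s ∈ P.goal → d s = 0) ∧
    (∀ s a, ReachedBy P π s → π s = some a →
      (fair a → ∃ s' ∈ P.F a s, d s' < d s) ∧
      (¬ fair a → ∀ s' ∈ P.F a s, d s' < d s))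

end FondPaper

open FondPaper


namespace Stmt9Aux

open Classical

variable {S : Type}

/-- State machine: current state plus visit counts. -/
noncomputable def mach (step : S → ℕ → S) (s0 : S) : ℕ → S × (S → ℕ) :=
  fun i => Nat.rec (s0, fun _ => 0)
    (fun _ p => (step p.1 (p.2 p.1),
      fun v => if v = p.1 then p.2 p.1 + 1 else p.2 v)) i

noncomputable def mext (step : S → ℕ → S) (s0 : S) (i : ℕ) : S := (mach step s0 i).1
noncomputable def mcnt (step : S → ℕ → S) (s0 : S) (i : ℕ) : S → ℕ := (mach step s0 i).2

variable {step : S → ℕ → S} {s0 : S}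

lemma mext_zero : mext step s0 0 = s0 := rfl

lemma mext_succ (i : ℕ) :
    mext step s0 (i + 1) = step (mext step s0 i) (mcnt step s0 i (mext step s0 i)) := rfl

lemma mcnt_succ (i : ℕ) (v : S) :
    mcnt step s0 (i + 1) v =
      if v = mext step s0 i then mcnt step s0 i (mext step s0 i) + 1
      else mcnt step s0 i v := rfl

lemma mcnt_le (i : ℕ) (v : S) : mcnt step s0 i v ≤ i := by
  induction i generalizing v with
  | zero => exact le_rfl
  | succ i ih =>
    rw [mcnt_succ]
    split
    · exact Nat.succ_le_succ (ih _)
    · exact (ih v).trans (Nat.le_succ i)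

lemma mcnt_const (u : S) (i : ℕ) :
    ∀ j, i ≤ j → (∀ l, i ≤ l → l < j → mext step s0 l ≠ u) →
      mcnt step s0 j u = mcnt step s0 i u := by
  intro j
  induction j with
  | zero => intro h _; exact congrFun (congrArg _ (congrArg _ (Nat.le_zero.mp h).symm)) u
  | succ j ih =>
    intro hij hno
    rcases Nat.lt_or_ge i (j + 1) with h | h
    · have hij' : i ≤ j := Nat.lt_succ_iff.mp h
      have hne : mext step s0 j ≠ u := hno j hij' (Nat.lt_succ_self j)
      rw [mcnt_succ, if_neg (fun hh => hne hh.symm)]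
      exact ih hij' (fun l hl hl' => hno l hl (hl'.trans (Nat.lt_succ_self j)))
    · have : i = j + 1 := le_antisymm hij h
      rw [this]

lemma next_visit (u : S) (hinf : {i | mext step s0 i = u}.Infinite)
    {i : ℕ} (hu : mext step s0 i = u) :
    ∃ j, i < j ∧ mext step s0 j = u ∧ mcnt step s0 j u = mcnt step s0 i u + 1 := by
  obtain ⟨j0, hj0, hj0i⟩ := hinf.exists_gt i
  have hex : ∃ j, i < j ∧ mext step s0 j = u := ⟨j0, hj0i, hj0⟩
  classical
  let j := Nat.find hex
  have hj : i < j ∧ mext step s0 j = u := Nat.find_spec hex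
  refine ⟨j, hj.1, hj.2, ?_⟩
  have h1 : mcnt step s0 j u = mcnt step s0 (i + 1) u := by
    apply mcnt_const u (i + 1) j hj.1
    intro l hl hlj hlu
    exact absurd ⟨Nat.lt_of_succ_le hl, hlu⟩ (Nat.find_min hex hlj)
  rw [h1, mcnt_succ, if_pos hu.symm, hu]

lemma visits_all (u : S) (hinf : {i | mext step s0 i = u}.Infinite)
    {i0 : ℕ} (hu0 : mext step s0 i0 = u) :
    ∀ k, ∃ i, mext step s0 i = u ∧ mcnt step s0 i u = mcnt step s0 i0 u + k := by
  intro k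
  induction k with
  | zero => exact ⟨i0, hu0, rfl⟩
  | succ k ih =>
    obtain ⟨i, hi, hc⟩ := ih
    obtain ⟨j, _, hj, hcj⟩ := next_visit u hinf hi
    exact ⟨j, hj, by rw [hcj, hc]; ring⟩

lemma mfair (u s' : S) (hinf : {i | mext step s0 i = u}.Infinite)
    (hs' : {k | step u k = s'}.Infinite) :
    {i | mext step s0 i = u ∧ mext step s0 (i + 1) = s'}.Infinite := by
  apply Set.infinite_of_forall_exists_gt
  intro N
  obtain ⟨i0, hi0⟩ := hinf.nonempty
  obtain ⟨k, hk, hkN⟩ := hs'.exists_gt (mcnt step s0 i0 u + N)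
  have hk2 : mcnt step s0 i0 u ≤ k := le_of_lt (lt_of_le_of_lt (Nat.le_add_right _ _) hkN)
  obtain ⟨i, hi, hci⟩ := visits_all u hinf hi0 (k - mcnt step s0 i0 u)
  have hcik : mcnt step s0 i u = k := by omega
  refine ⟨i, ⟨hi, ?_⟩, ?_⟩
  · rw [mext_succ, hi, hcik]; exact hk
  · have := mcnt_le (step := step) (s0 := s0) i u
    omega

/-- A cycling enumeration of a finite nonempty set. -/
lemma exists_cycle (T : Set S) (hfin : T.Finite) (hne : T.Nonempty) :
    ∃ f : ℕ → S, (∀ k, f k ∈ T) ∧ ∀ t ∈ T, {k | f k = t}.Infinite := by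
  classical
  obtain ⟨t0, ht0⟩ := hne
  set l : List S := hfin.toFinset.toList with hl
  have hmem : ∀ t, t ∈ l ↔ t ∈ T := by
    intro t; rw [hl, Finset.mem_toList, Set.Finite.mem_toFinset]
  have hlen : 0 < l.length := by
    rcases Nat.eq_zero_or_pos l.length with h | h
    · exact absurd ((hmem t0).mpr ht0) (by simp [List.length_eq_zero_iff.mp h])
    · exact h
  refine ⟨fun k => l.get ⟨k % l.length, Nat.mod_lt _ hlen⟩, ?_, ?_⟩
  · intro k; exact (hmem _).mp (l.get_mem _)
  · intro t ht
    obtain ⟨⟨j, hjl⟩, hj⟩ := List.get_of_mem ((hmem t).mpr ht)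
    apply Set.infinite_of_forall_exists_gt
    intro N
    refine ⟨j + (N + 1) * l.length, ?_, ?_⟩
    · show l.get _ = t
      have : (j + (N + 1) * l.length) % l.length = j % l.length := by
        simp [Nat.add_mul_mod_self_right]
      simp only [this, Nat.mod_eq_of_lt hjl]
      exact hj
    · calc N < (N + 1) * l.length := by
              calc N < N + 1 := Nat.lt_succ_self N
              _ ≤ (N + 1) * l.length := Nat.le_mul_of_pos_right _ hlen
      _ ≤ j + (N + 1) * l.length := Nat.le_add_left _ _

end Stmt9Aux

open Stmt9Aux in

/-- if π solves the FOND+ problem ⟨P, C⟩ then π is a strong-cyclic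
solution of the underlying FOND problem P. -/
theorem stmt9 (S A : Type) [Finite S] [Finite A] (P : FOND S A) (hgoal : P.goal.Nonempty)
    (π : S → Option A) (hπ : IsPolicy P π)
    (C : Set (Set A × Set A)) (hC : WellFormedC P C)
    (hsolve : SolvesPlus P C π) :
    StrongCyclic P π := by
  classical
  intro s hreach
  by_contra hno
  push_neg at hno
  obtain ⟨τ0, ⟨hinit, hstep0⟩, n, hlen, hsn⟩ := hreach
  have hprefix : ∀ i < n, τ0.states i ∉ P.goal := by
    intro i hi hg
    have hstep : τ0.HasStep i := by
      intro m hm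
      have : n = m := Option.some.inj (hlen.symm.trans hm)
      omega
    obtain ⟨a, ha, _⟩ := hstep0 i hstep
    rw [hπ _ hg] at ha
    exact Option.some_ne_none _ ha.symm
  -- successor-choice machinery
  set T : S → Set S :=
    fun u => (π u).elim {u} (fun a => if (P.F a u).Nonempty then P.F a u else {u}) with hT
  have hTne : ∀ u, (T u).Nonempty := by
    intro u
    simp only [hT]
    cases hπu : π u with
    | none => simp only [hπu, Option.elim]; exact ⟨u, rfl⟩
    | some a =>
      simp only [hπu, Option.elim]
      split
      · assumption
      · exact ⟨u, rfl⟩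
  have hTeq : ∀ u a, π u = some a → (P.F a u).Nonempty → T u = P.F a u := by
    intro u a ha hne
    rw [hT]; simp [ha, hne]
  choose cyc hcyc1 hcyc2 using fun u => exists_cycle (T u) (Set.toFinite _) (hTne u)
  set es : ℕ → S := mext cyc s with hes
  have hes0 : es 0 = s := rfl
  have hsucc : ∀ m a, π (es m) = some a → (P.F a (es m)).Nonempty →
      es (m + 1) ∈ P.F a (es m) := by
    intro m a ha hne
    have h1 := hcyc1 (es m) (mcnt cyc s m (es m))
    rw [hTeq _ a ha hne] at h1
    show mext cyc s (m + 1) ∈ _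
    rw [mext_succ]
    exact h1
  by_cases hA : ∀ m, ∃ a, π (es m) = some a ∧ (P.F a (es m)).Nonempty
  · -- infinite fair trajectory never reaching goal
    have hpstep : ∀ m, PStep P π (es m) (es (m + 1)) := by
      intro m
      obtain ⟨a, ha, hne⟩ := hA m
      exact ⟨a, ha, hsucc m a ha hne⟩
    have hreachext : ∀ m, ReachesFrom P π s (es m) := by
      intro m
      induction m with
      | zero => rw [hes0]; exact Relation.ReflTransGen.refl
      | succ m ih => exact ih.tail (hpstep m)
    set σ : Traj S := ⟨fun i => if i ≤ n then τ0.states i else es (i - n), none⟩ with hσ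
    have hσs : ∀ i, n ≤ i → σ.states i = es (i - n) := by
      intro i hi
      rcases eq_or_lt_of_le hi with h | h
      · subst h
        show (if n ≤ n then τ0.states n else _) = _
        rw [if_pos le_rfl, Nat.sub_self, hes0, hsn]
      · show (if i ≤ n then τ0.states i else es (i - n)) = es (i - n)
        rw [if_neg (by omega)]
    have hIsTraj : IsTraj P π σ := by
      constructor
      · show (if 0 ≤ n then τ0.states 0 else es (0 - n)) = P.init
        rw [if_pos (Nat.zero_le n), hinit]
      · intro i _
        rcases lt_or_ge i n with h | h
        · have h1 : σ.states i = τ0.states i := if_pos h.le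
          have h2 : σ.states (i + 1) = τ0.states (i + 1) := if_pos h
          obtain ⟨a, ha, hf⟩ := hstep0 i (by
            intro m hm
            have : n = m := Option.some.inj (hlen.symm.trans hm)
            omega)
          exact ⟨a, by rw [h1]; exact ha, by rw [h1, h2]; exact hf⟩
        · rw [hσs i h, hσs (i + 1) (by omega), show i + 1 - n = (i - n) + 1 by omega]
          exact hpstep (i - n)
    have hFair : FairPlus P C π σ := by
      intro u hrec _ a ha s' hs'
      have hinfext : {m | es m = u}.Infinite := by
        have h1 : ({i | σ.states i = u} \ Set.Iio n).Infinite :=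
          hrec.2.diff (Set.finite_Iio n)
        have h2 : (fun i => i - n) '' ({i | σ.states i = u} \ Set.Iio n) ⊆
            {m | es m = u} := by
          rintro m ⟨i, ⟨hiu, hin⟩, rfl⟩
          have hin' : n ≤ i := by simpa using hin
          show es (i - n) = u
          rw [← hσs i hin']
          exact hiu
        refine Set.Infinite.mono h2 (h1.image ?_)
        intro i hi j hj hij
        have hi' : n ≤ i := by simpa using hi.2
        have hj' : n ≤ j := by simpa using hj.2
        dsimp at hij
        omega
      have hs'T : s' ∈ T u := by
        rw [hTeq u a ha ⟨s', hs'⟩]; exact hs'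
      have hmf := mfair u s' hinfext (hcyc2 u s' hs'T)
      have himg : (fun m => m + n) '' {m | es m = u ∧ es (m + 1) = s'} ⊆
          {i | σ.states i = u ∧ σ.states (i + 1) = s'} := by
        rintro i ⟨m, ⟨h1, h2⟩, rfl⟩
        constructor
        · rw [hσs (m + n) (Nat.le_add_left n m), Nat.add_sub_cancel]
          exact h1
        · rw [hσs (m + n + 1) (by omega), show m + n + 1 - n = m + 1 by omega]
          exact h2
      exact Set.Infinite.mono himg (hmf.image (fun a _ b _ h => by omega))
    obtain ⟨i, _, hgl⟩ := hsolve σ hIsTraj (Or.inl rfl) hFair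
    rcases lt_or_ge i n with h | h
    · exact hprefix i h (by rwa [show σ.states i = τ0.states i from if_pos h.le] at hgl)
    · rw [hσs i h] at hgl
      exact hno _ hgl (hreachext (i - n))
  · -- finite maximal trajectory never reaching goal
    have hex : ∃ m, ¬ ∃ a, π (es m) = some a ∧ (P.F a (es m)).Nonempty := not_forall.mp hA
    set m := Nat.find hex with hmdef
    have hm := Nat.find_spec hex
    have hlt : ∀ m' < m, ∃ a, π (es m') = some a ∧ (P.F a (es m')).Nonempty :=
      fun m' h => not_not.mp (Nat.find_min hex h)
    have hpstep : ∀ m' < m, PStep P π (es m') (es (m' + 1)) := by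
      intro m' h
      obtain ⟨a, ha, hne⟩ := hlt m' h
      exact ⟨a, ha, hsucc m' a ha hne⟩
    have hreachext : ∀ m' ≤ m, ReachesFrom P π s (es m') := by
      intro m' hm'
      induction m' with
      | zero => rw [hes0]; exact Relation.ReflTransGen.refl
      | succ m' ih => exact (ih (by omega)).tail (hpstep m' (by omega))
    set σ : Traj S := ⟨fun i => if i ≤ n then τ0.states i else es (i - n), some (n + m)⟩ with hσ
    have hσs : ∀ i, n ≤ i → σ.states i = es (i - n) := by
      intro i hi
      rcases eq_or_lt_of_le hi with h | h
      · subst h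
        show (if n ≤ n then τ0.states n else _) = _
        rw [if_pos le_rfl, Nat.sub_self, hes0, hsn]
      · show (if i ≤ n then τ0.states i else es (i - n)) = es (i - n)
        rw [if_neg (by omega)]
    have hIsTraj : IsTraj P π σ := by
      constructor
      · show (if 0 ≤ n then τ0.states 0 else es (0 - n)) = P.init
        rw [if_pos (Nat.zero_le n), hinit]
      · intro i hhs
        have hi : i < n + m := hhs (n + m) rfl
        rcases lt_or_ge i n with h | h
        · have h1 : σ.states i = τ0.states i := if_pos h.le
          have h2 : σ.states (i + 1) = τ0.states (i + 1) := if_pos h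
          obtain ⟨a, ha, hf⟩ := hstep0 i (by
            intro m' hm'
            have : n = m' := Option.some.inj (hlen.symm.trans hm')
            omega)
          exact ⟨a, by rw [h1]; exact ha, by rw [h1, h2]; exact hf⟩
        · rw [hσs i h, hσs (i + 1) (by omega), show i + 1 - n = (i - n) + 1 by omega]
          exact hpstep (i - n) (by omega)
    have hMax : MaximalTraj P π σ := by
      refine Or.inr ⟨n + m, rfl, ?_⟩
      have hnm : σ.states (n + m) = es m := by
        rw [hσs (n + m) (Nat.le_add_right n m), Nat.add_sub_cancel_left]
      cases hπm : π (es m) with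
      | none => exact Or.inr (Or.inl (by rw [hnm, hπm]))
      | some a =>
        refine Or.inr (Or.inr ⟨a, by rw [hnm, hπm], ?_⟩)
        intro happ
        rw [hnm] at happ
        exact hm ⟨a, hπm, happ⟩
    have hFair : FairPlus P C π σ := by
      intro u hrec
      exact absurd hrec.1 (by simp [hσ])
    obtain ⟨i, hin, hgl⟩ := hsolve σ hIsTraj hMax hFair
    have hile : i ≤ n + m := hin (n + m) rfl
    rcases lt_or_ge i n with h | h
    · exact hprefix i h (by rwa [show σ.states i = τ0.states i from if_pos h.le] at hgl)
    · rw [hσs i h] at hgl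
      exact hno _ hgl (hreachext (i - n) (by omega))
end

section
/- For any Dual FOND problem P and any policy π: π solves P if and only if for every non-goal state s reachable by π, π(s) is defined and applicable in s, and s is terminating per the inductive Dual-FOND termination definition. -/
open FondPaper

section Aux

variable {S A : Type}

/-- Extend a reached state by one policy step. -/
lemma reach_succ {P : FOND S A} {π : S → Option A} {s s' : S}
    (h : ReachedBy P π s) {a : A} (ha : π s = some a) (hs' : s' ∈ P.F a s) :
    ReachedBy P π s' := by
  obtain ⟨τ, ⟨h0, hstep⟩, n, hlen, hend⟩ := h
  refine ⟨⟨fun i => if i ≤ n then τ.states i else s', some (n + 1)⟩, ⟨?_, ?_⟩, n + 1, rfl, ?_⟩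
  · simpa using h0
  · intro i hi
    have hin : i < n + 1 := hi (n + 1) rfl
    by_cases hlt : i < n
    · obtain ⟨b, hb, hmem⟩ := hstep i (fun m hm => by rw [hlen] at hm; injection hm with h; omega)
      refine ⟨b, ?_, ?_⟩
      · simp only [hlt.le, if_pos]
        exact hb
      · have h1 : i ≤ n := hlt.le
        have h2 : i + 1 ≤ n := hlt
        simp only [h1, h2, if_pos]
        exact hmem
    · have hi_eq : i = n := by omega
      subst hi_eq
      refine ⟨a, ?_, ?_⟩
      · simp [hend, ha]
      · simp [hend, hs']
  · simp

/-- One step of the Dual-FOND termination operator. -/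
def DPhi (P : FOND S A) (fair : A → Prop) (π : S → Option A) (T : Set S) : Set S :=
  P.goal ∪ {s | ∃ a, π s = some a ∧ fair a ∧ ∃ s' ∈ P.F a s, s' ∈ T} ∪
    {s | ∃ a, π s = some a ∧ ¬ fair a ∧ (P.F a s).Nonempty ∧ P.F a s ⊆ T}

lemma DPhi_mono (P : FOND S A) (fair : A → Prop) (π : S → Option A) :
    Monotone (DPhi P fair π) := by
  intro T T' hTT s hs
  rcases hs with (hg | ⟨a, ha, hf, s', hmem, hT⟩) | ⟨a, ha, hf, hne, hsub⟩
  · exact Or.inl (Or.inl hg)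
  · exact Or.inl (Or.inr ⟨a, ha, hf, s', hmem, hTT hT⟩)
  · exact Or.inr ⟨a, ha, hf, hne, fun x hx => hTT (hsub hx)⟩

lemma DPhi_chain (P : FOND S A) (fair : A → Prop) (π : S → Option A) :
    ∀ n, (DPhi P fair π)^[n] ∅ ⊆ (DPhi P fair π)^[n + 1] ∅ := by
  intro n
  induction n with
  | zero => simp
  | succ n ih =>
    rw [Function.iterate_succ_apply', Function.iterate_succ_apply']
    exact DPhi_mono P fair π ih

lemma DPhi_chain_le (P : FOND S A) (fair : A → Prop) (π : S → Option A) :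
    ∀ {m n : ℕ}, m ≤ n → (DPhi P fair π)^[m] ∅ ⊆ (DPhi P fair π)^[n] ∅ := by
  intro m n hmn
  induction n, hmn using Nat.le_induction with
  | base => exact subset_rfl
  | succ n hmn ih => exact ih.trans (DPhi_chain P fair π n)

lemma DPhi_stab [Fintype S] (P : FOND S A) (fair : A → Prop) (π : S → Option A) :
    (DPhi P fair π)^[Fintype.card S + 1] ∅ = (DPhi P fair π)^[Fintype.card S] ∅ := by
  classical
  set N := Fintype.card S with hN
  set T : ℕ → Set S := fun n => (DPhi P fair π)^[n] ∅ with hT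
  by_contra h
  have strict : ∀ m ≤ N, T m ⊂ T (m + 1) := by
    intro m hm
    refine (DPhi_chain P fair π m).ssubset_of_ne ?_
    intro heq
    apply h
    have hconst : ∀ j, T (m + j) = T m := by
      intro j
      induction j with
      | zero => rfl
      | succ j ihj =>
        show (DPhi P fair π)^[m + j + 1] ∅ = T m
        rw [Function.iterate_succ_apply']
        have h2 : (DPhi P fair π)^[m + j] ∅ = (DPhi P fair π)^[m] ∅ := ihj
        rw [h2]
        exact (Function.iterate_succ_apply' _ _ _).symm.trans heq.symm
    have e1 : T (N + 1) = T m := by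
      have := hconst (N + 1 - m); rwa [Nat.add_sub_cancel' (by omega)] at this
    have e2 : T N = T m := by
      have := hconst (N - m); rwa [Nat.add_sub_cancel' hm] at this
    show T (N + 1) = T N
    rw [e1, e2]
  have hcard : ∀ m ≤ N + 1, m ≤ (T m).ncard := by
    intro m hm
    induction m with
    | zero => simp
    | succ m ihm =>
      have h1 : m ≤ (T m).ncard := ihm (by omega)
      have h2 : (T m).ncard < (T (m + 1)).ncard :=
        Set.ncard_lt_ncard (strict m (by omega)) (Set.toFinite _)
      omega
  have hle : (T (N + 1)).ncard ≤ N := by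
    have := Set.ncard_le_ncard (Set.subset_univ (T (N + 1))) (Set.toFinite _)
    rwa [Set.ncard_univ, Nat.card_eq_fintype_card] at this
  have := hcard (N + 1) le_rfl
  omega

lemma DPhi_fixed_closed [Fintype S] (P : FOND S A) (fair : A → Prop) (π : S → Option A) :
    DualClosed P fair π ((DPhi P fair π)^[Fintype.card S] ∅) := by
  have hfix : DPhi P fair π ((DPhi P fair π)^[Fintype.card S] ∅)
      = (DPhi P fair π)^[Fintype.card S] ∅ := by
    have := DPhi_stab P fair π
    rwa [Function.iterate_succ_apply'] at this
  refine ⟨?_, ?_, ?_⟩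
  · intro s hs
    rw [← hfix]; exact Or.inl (Or.inl hs)
  · intro s a ha hf ⟨s', hmem, hT⟩
    rw [← hfix]; exact Or.inl (Or.inr ⟨a, ha, hf, s', hmem, hT⟩)
  · intro s a ha hf hne hall
    rw [← hfix]; exact Or.inr ⟨a, ha, hf, hne, hall⟩

end Aux

/-- π solves the Dual FOND problem P iff for every non-goal state s
reachable by π, π(s) is defined and applicable in s and s is Dual-FOND terminating. -/
theorem stmt10 (S A : Type) [Fintype S] [Finite A] (P : FOND S A) (hgoal : P.goal.Nonempty)
    (π : S → Option A) (hπ : IsPolicy P π) (fair : A → Prop) :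
    SolvesDual P fair π ↔
      ∀ s, ReachedBy P π s → s ∉ P.goal →
        (∃ a, π s = some a ∧ (P.F a s).Nonempty) ∧ DualTerm P fair π s := by
  classical
  constructor
  · rintro ⟨happ, d, _, _, hd3⟩ s hs hsg
    refine ⟨happ s hs hsg, ?_⟩
    rintro T ⟨hTg, hTf, hTa⟩
    suffices key : ∀ n s, ReachedBy P π s → d s ≤ n → s ∈ T from key (d s) s hs le_rfl
    intro n
    induction n with
    | zero =>
      intro s hs hds
      by_cases hg : s ∈ P.goal
      · exact hTg hg
      · obtain ⟨a, ha, hne⟩ := happ s hs hg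
        have h3 := hd3 s a hs ha
        by_cases hf : fair a
        · obtain ⟨s', _, hlt⟩ := h3.1 hf
          omega
        · obtain ⟨s', hs'⟩ := hne
          have := h3.2 hf s' hs'
          omega
    | succ n ih =>
      intro s hs hds
      by_cases hg : s ∈ P.goal
      · exact hTg hg
      obtain ⟨a, ha, hne⟩ := happ s hs hg
      have h3 := hd3 s a hs ha
      by_cases hf : fair a
      · obtain ⟨s', hmem, hlt⟩ := h3.1 hf
        exact hTf s a ha hf ⟨s', hmem, ih s' (reach_succ hs ha hmem) (by omega)⟩
      · refine hTa s a ha hf hne fun s' hmem => ih s' (reach_succ hs ha hmem) ?_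
        have := h3.2 hf s' hmem
        omega
  · intro H
    refine ⟨fun s hs hg => (H s hs hg).1, ?_⟩
    set N := Fintype.card S with hN
    have hNpos : 1 ≤ N := by
      have : Nonempty S := ⟨hgoal.choose⟩
      exact Fintype.card_pos
    set T : ℕ → Set S := fun n => (DPhi P fair π)^[n] ∅ with hT
    have hgoalT : P.goal ⊆ T 1 := by
      intro s hs
      show s ∈ DPhi P fair π ∅
      exact Or.inl (Or.inl hs)
    have hmemN : ∀ s, ReachedBy P π s → s ∈ T N := by
      intro s hs
      by_cases hg : s ∈ P.goal
      · exact DPhi_chain_le P fair π hNpos (hgoalT hg)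
      · exact (H s hs hg).2 (T N) (DPhi_fixed_closed P fair π)
    let d : S → ℕ := fun s => if h : ∃ k, s ∈ T (k + 1) then Nat.find h else 0
    have hdval : ∀ s (h : ∃ k, s ∈ T (k + 1)), d s = Nat.find h := fun s h => dif_pos h
    refine ⟨d, ?_, ?_, ?_⟩
    · intro s hs
      have hsN : s ∈ T N := hmemN s hs
      have h : ∃ k, s ∈ T (k + 1) := ⟨N - 1, by rwa [Nat.sub_add_cancel hNpos]⟩
      rw [hdval s h]
      have := Nat.find_min' h (show s ∈ T (N - 1 + 1) by rwa [Nat.sub_add_cancel hNpos])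
      omega
    · intro s hs hg
      have h : ∃ k, s ∈ T (k + 1) := ⟨0, hgoalT hg⟩
      rw [hdval s h]
      exact Nat.find_eq_zero h |>.mpr (hgoalT hg)
    · intro s a hs ha
      have hg : s ∉ P.goal := fun hg => by simp [hπ s hg] at ha
      have hsN : s ∈ T N := hmemN s hs
      have h : ∃ k, s ∈ T (k + 1) := ⟨N - 1, by rwa [Nat.sub_add_cancel hNpos]⟩
      rw [hdval s h]
      set m := Nat.find h with hm
      have hsm : s ∈ T (m + 1) := Nat.find_spec h
      have hsm' : s ∈ DPhi P fair π (T m) := by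
        rwa [show T (m + 1) = DPhi P fair π (T m) from Function.iterate_succ_apply' _ _ _] at hsm
      have hdle : ∀ s', s' ∈ T m → d s' < m := by
        intro s' hs'
        have hmpos : 1 ≤ m := by
          rcases Nat.eq_zero_or_pos m with h0 | h1
          · rw [h0] at hs'; exact absurd hs' (by simp [hT])
          · exact h1
        have h' : ∃ k, s' ∈ T (k + 1) := ⟨m - 1, by rwa [Nat.sub_add_cancel hmpos]⟩
        rw [hdval s' h']
        have := Nat.find_min' h' (show s' ∈ T (m - 1 + 1) by rwa [Nat.sub_add_cancel hmpos])
        omega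
      constructor
      · intro hf
        rcases hsm' with (hgl | ⟨a', ha', _, s', hmem, hTm⟩) | ⟨a', ha', hf', _, _⟩
        · exact absurd hgl hg
        · have : a' = a := by rw [ha] at ha'; exact (Option.some_injective _ ha').symm
          subst this
          exact ⟨s', hmem, hdle s' hTm⟩
        · have : a' = a := by rw [ha] at ha'; exact (Option.some_injective _ ha').symm
          subst this
          exact absurd hf hf'
      · intro hf
        rcases hsm' with (hgl | ⟨a', ha', hf', _, _, _⟩) | ⟨a', ha', _, _, hsub⟩
        · exact absurd hgl hg
        · have : a' = a := by rw [ha] at ha'; exact (Option.some_injective _ ha').symm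
          subst this
          exact absurd hf' hf
        · have : a' = a := by rw [ha] at ha'; exact (Option.some_injective _ ha').symm
          subst this
          exact fun s' hmem => hdle s' (hsub hmem)
end

section
/- A policy π solves a Dual FOND problem P' if and only if π solves the FOND+ problem ⟨P, {A/∅}⟩, where P is P' with the fair/adversarial action labels removed and A is the set of actions labeled fair in P' (with the B-part of the constraint empty). -/
namespace Stmt11Aux
open FondPaper Classical

variable {S A : Type}

/-! ### Basic reachability lemmas -/

lemma reachedBy_init (P : FOND S A) (π : S → Option A) : ReachedBy P π P.init := by
  refine ⟨⟨fun _ => P.init, some 0⟩, ⟨rfl, ?_⟩, 0, rfl, rfl⟩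
  intro i hi
  exact absurd (hi 0 rfl) (by omega)

lemma reachedBy_step {P : FOND S A} {π : S → Option A} {s s' : S}
    (h : ReachedBy P π s) (hst : PStep P π s s') : ReachedBy P π s' := by
  obtain ⟨τ, ⟨h0, hstep⟩, n, hlen, hend⟩ := h
  refine ⟨⟨fun i => if i ≤ n then τ.states i else s', some (n + 1)⟩,
    ⟨by simp [h0], ?_⟩, n + 1, rfl, by simp⟩
  intro i hi
  have hi' : i < n + 1 := hi (n + 1) rfl
  by_cases hin : i < n
  · have := hstep i (fun m hm => by cases hlen ▸ hm; omega)
    simpa [Nat.le_of_lt hin, Nat.succ_le_of_lt hin] using this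
  · have hieq : i = n := by omega
    subst hieq
    obtain ⟨a, ha, hmem⟩ := hst
    exact ⟨a, by simpa [hend] using ha, by simp [hend ▸ hmem]⟩

/-- every state inside a trajectory is reached by the policy -/
lemma reachedBy_of_traj {P : FOND S A} {π : S → Option A} {τ : Traj S}
    (h : IsTraj P π τ) (i : ℕ) (hi : τ.Inside i) : ReachedBy P π (τ.states i) := by
  refine ⟨⟨τ.states, some i⟩, ⟨h.1, ?_⟩, i, rfl, rfl⟩
  intro j hj
  have hji : j < i := hj i rfl
  exact h.2 j (fun m hm => lt_of_lt_of_le hji (hi m hm))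

/-- states strictly before the end of a trajectory are not goal states -/
lemma not_goal_of_hasStep {P : FOND S A} {π : S → Option A} {τ : Traj S}
    (hpol : IsPolicy P π) (h : IsTraj P π τ) (i : ℕ) (hi : τ.HasStep i) :
    τ.states i ∉ P.goal := by
  intro hg
  obtain ⟨a, ha, -⟩ := h.2 i hi
  rw [hpol _ hg] at ha
  exact nomatch ha

/-- From SolvesPlus: the policy is defined and applicable at reached non-goal states. -/
lemma applicable_of_solvesPlus {P : FOND S A} {π : S → Option A}
    {C : Set (Set A × Set A)} (hpol : IsPolicy P π) (hs : SolvesPlus P C π) :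
    ∀ s, ReachedBy P π s → s ∉ P.goal → ∃ a, π s = some a ∧ (P.F a s).Nonempty := by
  intro s hr hg
  by_contra hno
  push_neg at hno
  obtain ⟨τ, htraj, n, hlen, hend⟩ := hr
  subst hend
  have hmax : MaximalTraj P π τ := by
    right
    refine ⟨n, hlen, ?_⟩
    cases hπs : π (τ.states n) with
    | none => exact Or.inr (Or.inl rfl)
    | some a =>
      refine Or.inr (Or.inr ⟨a, rfl, ?_⟩)
      simp [FOND.Applicable, hno a hπs]
  have hfair : FairPlus P C π τ := by
    intro t hrec
    rw [RecurrentIn, hlen] at hrec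
    exact absurd hrec.1 (by simp)
  obtain ⟨i, hins, higoal⟩ := hs τ htraj hmax hfair
  have hin : i ≤ n := hins n hlen
  rcases lt_or_eq_of_le hin with hlt | heq
  · exact not_goal_of_hasStep hpol htraj i (fun m hm => by cases hlen ▸ hm; omega) higoal
  · exact hg (heq ▸ higoal)

end Stmt11Aux

namespace Stmt11Aux
open FondPaper Classical

variable {S A : Type}

lemma forward [Fintype S] {P : FOND S A} {π : S → Option A} {fair : A → Prop}
    (hd : SolvesDual P fair π) :
    SolvesPlus P ({({a | fair a}, (∅ : Set A))} : Set (Set A × Set A)) π := by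
  intro τ htraj hmax hfp
  cases hlen : τ.len with
  | some n =>
    by_cases hg : τ.states n ∈ P.goal
    · exact ⟨n, fun m hm => by rw [hlen] at hm; cases hm; exact le_rfl, hg⟩
    · exfalso
      have hreach : ReachedBy P π (τ.states n) :=
        reachedBy_of_traj htraj n (fun m hm => by rw [hlen] at hm; cases hm; exact le_rfl)
      obtain ⟨a, ha, hane⟩ := hd.1 (τ.states n) hreach hg
      rcases hmax with h | ⟨n', hlen', hc⟩
      · rw [hlen] at h; exact nomatch h
      · rw [hlen] at hlen'; cases hlen'
        rcases hc with ⟨hgg, -⟩ | hnone | ⟨a', ha', hnap⟩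
        · exact hg hgg
        · rw [hnone] at ha; exact nomatch ha
        · rw [ha'] at ha; cases ha; exact hnap hane
  | none =>
    by_contra hng
    have hnogoal : ∀ i, τ.states i ∉ P.goal := by
      intro i hi
      exact hng ⟨i, fun m hm => by rw [hlen] at hm; exact (nomatch hm), hi⟩
    have hinside : ∀ i, (τ : Traj S).Inside i := by
      intro i m hm; rw [hlen] at hm; exact nomatch hm
    have hreach : ∀ i, ReachedBy P π (τ.states i) :=
      fun i => reachedBy_of_traj htraj i (hinside i)
    -- recurrent states
    set R : Set S := {t | {i | τ.states i = t}.Infinite} with hRdef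
    have hRne : R.Nonempty := by
      by_contra hre
      rw [Set.not_nonempty_iff_eq_empty] at hre
      have huniv : (Set.univ : Set ℕ) = ⋃ t : S, {i | τ.states i = t} := by
        ext i; simp
      have : (Set.univ : Set ℕ).Finite := by
        rw [huniv]
        refine Set.finite_iUnion (fun t => ?_)
        have : t ∉ R := by rw [hre]; exact Set.notMem_empty t
        exact Set.not_infinite.mp this
      exact Set.infinite_univ this
    have hBfin : (⋃ t : S, {i | τ.states i = t ∧ t ∉ R}).Finite := by
      refine Set.finite_iUnion (fun t => ?_)
      by_cases ht : t ∈ R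
      · convert Set.finite_empty using 1
        ext i; simp [ht]
      · exact Set.Finite.subset (Set.not_infinite.mp ht) (fun i hi => hi.1)
    obtain ⟨N, hN⟩ := hBfin.bddAbove
    have hRmem : ∀ i, N < i → τ.states i ∈ R := by
      intro i hi
      by_contra h
      have : i ∈ ⋃ t : S, {i | τ.states i = t ∧ t ∉ R} :=
        Set.mem_iUnion.mpr ⟨τ.states i, rfl, h⟩
      exact absurd (hN this) (by omega)
    obtain ⟨dd, hbd, hg0, hdec⟩ := hd.2
    obtain ⟨u, huR, humin⟩ := Set.exists_min_image R dd (Set.toFinite R) hRne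
    have hu : {i | τ.states i = u}.Infinite := huR
    obtain ⟨i₀, hi₀u, hi₀N⟩ := hu.exists_gt N
    have hureach : ReachedBy P π u := hi₀u ▸ hreach i₀
    have hugoal : u ∉ P.goal := hi₀u ▸ hnogoal i₀
    obtain ⟨a, hπu, hFne⟩ := hd.1 u hureach hugoal
    by_cases hfa : fair a
    · obtain ⟨s', hs'F, hs'd⟩ := (hdec u a hureach hπu).1 hfa
      have hocc : FairOcc ({({a | fair a}, (∅ : Set A))} : Set (Set A × Set A)) π τ u :=
        ⟨({a | fair a}, (∅ : Set A)), rfl, ⟨a, hπu, hfa⟩, by simp⟩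
      have hinf := hfp u ⟨hlen, hu⟩ hocc a hπu s' hs'F
      obtain ⟨i, ⟨hiu, hisucc⟩, hiN⟩ := hinf.exists_gt N
      have : s' ∈ R := hisucc ▸ hRmem (i + 1) (by omega)
      exact absurd (humin s' this) (by omega)
    · obtain ⟨i, hiu, hiN⟩ := hu.exists_gt N
      obtain ⟨a', ha', hmem⟩ := htraj.2 i (fun m hm => by rw [hlen] at hm; exact nomatch hm)
      rw [hiu] at ha' hmem
      rw [hπu] at ha'; cases ha'
      have hlt := (hdec u a hureach hπu).2 hfa _ hmem
      have : τ.states (i + 1) ∈ R := hRmem (i + 1) (by omega)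
      exact absurd (humin _ this) (by omega)

end Stmt11Aux

namespace Stmt11Aux
open FondPaper Classical

variable {S A : Type}

/-! ### Fair successor enumeration -/

noncomputable def succL [Finite S] (P : FOND S A) (π : S → Option A) (u : S) : List S :=
  match π u with
  | some a => (Set.toFinite (P.F a u)).toFinset.toList
  | none => []

noncomputable def enum [Finite S] (P : FOND S A) (π : S → Option A) (u : S) (k : ℕ) : S :=
  (succL P π u).getD (k % (succL P π u).length) u

lemma succL_eq [Finite S] {P : FOND S A} {π : S → Option A} {u : S} {a : A}
    (h : π u = some a) : succL P π u = (Set.toFinite (P.F a u)).toFinset.toList := by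
  unfold succL
  rw [h]

lemma mem_succL [Finite S] {P : FOND S A} {π : S → Option A} {u : S} {a : A}
    (h : π u = some a) {s' : S} : s' ∈ succL P π u ↔ s' ∈ P.F a u := by
  rw [succL_eq h, Finset.mem_toList, Set.Finite.mem_toFinset]

lemma enum_mem [Finite S] {P : FOND S A} {π : S → Option A} {u : S} {a : A}
    (h : π u = some a) (hne : (P.F a u).Nonempty) (k : ℕ) :
    enum P π u k ∈ P.F a u := by
  have hlen : 0 < (succL P π u).length := by
    rw [List.length_pos_iff]
    intro hnil
    obtain ⟨s', hs'⟩ := hne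
    exact (List.not_mem_nil (a := s')) (hnil ▸ (mem_succL h).mpr hs')
  have hmod : k % (succL P π u).length < (succL P π u).length := Nat.mod_lt _ hlen
  rw [← mem_succL h]
  unfold enum
  rw [List.getD_eq_getElem _ _ hmod]
  exact List.getElem_mem _

lemma enum_infinite [Finite S] {P : FOND S A} {π : S → Option A} {u : S} {a : A}
    (h : π u = some a) {s' : S} (hs' : s' ∈ P.F a u) :
    {k | enum P π u k = s'}.Infinite := by
  have hmem : s' ∈ succL P π u := (mem_succL h).mpr hs'
  obtain ⟨idx, hidx, hget⟩ := List.mem_iff_getElem.mp hmem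
  set L := (succL P π u).length with hL
  have hLpos : 0 < L := by omega
  refine Set.infinite_of_injective_forall_mem
    (f := fun j : ℕ => idx + j * L) ?_ ?_
  · intro x y hxy
    simp only at hxy
    exact Nat.eq_of_mul_eq_mul_right hLpos (by omega)
  · intro j
    show enum P π u (idx + j * L) = s'
    unfold enum
    have : (idx + j * L) % L = idx := by
      rw [Nat.add_mul_mod_self_right, Nat.mod_eq_of_lt hidx]
    rw [← hL, this, List.getD_eq_getElem _ _ hidx, hget]

end Stmt11Aux

namespace Stmt11Aux
open FondPaper Classical

variable {S A : Type}

/-! ### Infinite trajectory builder -/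

noncomputable def nxt [Finite S] (P : FOND S A) (π : S → Option A) (fair : A → Prop)
    (T : Set S) (u : S) (k : ℕ) : S :=
  if _ : ∃ a, π u = some a ∧ fair a then enum P π u k
  else if h : ∃ s', (∃ a, π u = some a ∧ s' ∈ P.F a u) ∧ s' ∉ T then h.choose else u

lemma nxt_fair [Finite S] {P : FOND S A} {π : S → Option A} {fair : A → Prop}
    {T : Set S} {u : S} {a : A} (h : π u = some a) (hf : fair a) (k : ℕ) :
    nxt P π fair T u k = enum P π u k := by
  unfold nxt
  rw [dif_pos ⟨a, h, hf⟩]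

lemma nxt_adv [Finite S] {P : FOND S A} {π : S → Option A} {fair : A → Prop}
    {T : Set S} {u : S} {a : A} (h : π u = some a) (hf : ¬ fair a)
    (hex : ∃ s' ∈ P.F a u, s' ∉ T) (k : ℕ) :
    nxt P π fair T u k ∈ P.F a u ∧ nxt P π fair T u k ∉ T := by
  have h1 : ¬ ∃ a', π u = some a' ∧ fair a' := by
    rintro ⟨a', ha', hfa'⟩
    rw [h] at ha'; cases ha'; exact hf hfa'
  have h2 : ∃ s', (∃ a', π u = some a' ∧ s' ∈ P.F a' u) ∧ s' ∉ T := by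
    obtain ⟨s', hs', hsT⟩ := hex
    exact ⟨s', ⟨a, h, hs'⟩, hsT⟩
  unfold nxt
  rw [dif_neg h1, dif_pos h2]
  obtain ⟨⟨a', ha', hmem⟩, hT⟩ := h2.choose_spec
  rw [h] at ha'; cases ha'
  exact ⟨hmem, hT⟩

noncomputable def trajAux [Finite S] (P : FOND S A) (π : S → Option A) (fair : A → Prop)
    (T : Set S) (s₀ : S) : ℕ → S × (S → ℕ)
  | 0 => (s₀, fun _ => 0)
  | n + 1 =>
    let p := trajAux P π fair T s₀ n
    (nxt P π fair T p.1 (p.2 p.1), fun t => if t = p.1 then p.2 p.1 + 1 else p.2 t)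

variable [Finite S] {P : FOND S A} {π : S → Option A} {fair : A → Prop} {T : Set S} {s₀ : S}

lemma g_zero : (trajAux P π fair T s₀ 0).1 = s₀ := rfl

lemma g_succ (n : ℕ) :
    (trajAux P π fair T s₀ (n+1)).1 =
      nxt P π fair T (trajAux P π fair T s₀ n).1
        ((trajAux P π fair T s₀ n).2 (trajAux P π fair T s₀ n).1) := rfl

lemma cnt_zero (t : S) : (trajAux P π fair T s₀ 0).2 t = 0 := rfl

lemma cnt_succ (n : ℕ) (t : S) :
    (trajAux P π fair T s₀ (n+1)).2 t =
      if t = (trajAux P π fair T s₀ n).1 then (trajAux P π fair T s₀ n).2 t + 1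
      else (trajAux P π fair T s₀ n).2 t := by
  show (if t = _ then (trajAux P π fair T s₀ n).2 (trajAux P π fair T s₀ n).1 + 1 else _) = _
  by_cases h : t = (trajAux P π fair T s₀ n).1
  · rw [if_pos h, if_pos h, h]
  · rw [if_neg h, if_neg h]

lemma cnt_mono_succ (n : ℕ) (t : S) :
    (trajAux P π fair T s₀ n).2 t ≤ (trajAux P π fair T s₀ (n+1)).2 t := by
  rw [cnt_succ]
  split <;> omega

lemma cnt_mono {m n : ℕ} (h : m ≤ n) (t : S) :
    (trajAux P π fair T s₀ m).2 t ≤ (trajAux P π fair T s₀ n).2 t := by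
  induction n with
  | zero => cases Nat.le_zero.mp h; exact le_rfl
  | succ n ih =>
    rcases Nat.lt_or_ge m (n+1) with h' | h'
    · exact le_trans (ih (by omega)) (cnt_mono_succ n t)
    · have : m = n + 1 := by omega
      rw [this]

lemma cnt_le_succ (n : ℕ) (t : S) :
    (trajAux P π fair T s₀ (n+1)).2 t ≤ (trajAux P π fair T s₀ n).2 t + 1 := by
  rw [cnt_succ]; split <;> omega

lemma cnt_succ_of_eq {n : ℕ} {t : S} (h : (trajAux P π fair T s₀ n).1 = t) :
    (trajAux P π fair T s₀ (n+1)).2 t = (trajAux P π fair T s₀ n).2 t + 1 := by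
  rw [cnt_succ, if_pos h.symm]

lemma cnt_unbounded {t : S} (ht : {m | (trajAux P π fair T s₀ m).1 = t}.Infinite) :
    ∀ k, ∃ n, k ≤ (trajAux P π fair T s₀ n).2 t := by
  intro k
  induction k with
  | zero => exact ⟨0, Nat.zero_le _⟩
  | succ k ih =>
    obtain ⟨n, hn⟩ := ih
    obtain ⟨m, hm, hnm⟩ := ht.exists_gt n
    refine ⟨m + 1, ?_⟩
    rw [cnt_succ_of_eq hm]
    have := cnt_mono (P := P) (π := π) (fair := fair) (T := T) (s₀ := s₀) (le_of_lt hnm) t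
    omega

/-- for every `k` there is an occurrence of `t` with visit-count exactly `k` -/
lemma cnt_exact {t : S} (ht : {m | (trajAux P π fair T s₀ m).1 = t}.Infinite) (k : ℕ) :
    ∃ m, (trajAux P π fair T s₀ m).1 = t ∧ (trajAux P π fair T s₀ m).2 t = k := by
  have hex : ∃ n, k + 1 ≤ (trajAux P π fair T s₀ n).2 t := cnt_unbounded ht (k + 1)
  have hnspec := Nat.find_spec hex
  have hnpos : Nat.find hex ≠ 0 := by
    intro h0
    rw [h0, cnt_zero] at hnspec
    omega
  obtain ⟨m, hm⟩ : ∃ m, Nat.find hex = m + 1 := ⟨Nat.find hex - 1, by omega⟩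
  rw [hm] at hnspec
  have hmlt : ¬ (k + 1 ≤ (trajAux P π fair T s₀ m).2 t) := Nat.find_min hex (by omega)
  have hle := cnt_le_succ (P := P) (π := π) (fair := fair) (T := T) (s₀ := s₀) m t
  have heq : (trajAux P π fair T s₀ m).1 = t := by
    by_contra hne
    rw [cnt_succ, if_neg (fun h => hne h.symm)] at hnspec
    omega
  exact ⟨m, heq, by omega⟩

end Stmt11Aux

namespace Stmt11Aux
open FondPaper Classical

variable {S A : Type}

lemma reached_in_T [Finite S] {P : FOND S A} {π : S → Option A} {fair : A → Prop} {T : Set S}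
    (hpol : IsPolicy P π)
    (hplus : SolvesPlus P ({({a | fair a}, (∅ : Set A))} : Set (Set A × Set A)) π)
    (hTgoal : P.goal ⊆ T)
    (hTfair : ∀ s a, s ∉ T → π s = some a → fair a → ∀ s' ∈ P.F a s, s' ∉ T)
    (hTadv : ∀ s a, s ∉ T → π s = some a → ¬ fair a → (P.F a s).Nonempty →
      ∃ s' ∈ P.F a s, s' ∉ T) :
    ∀ s, ReachedBy P π s → s ∈ T := by
  intro s₀ hr₀
  by_contra hs₀
  have happ := applicable_of_solvesPlus hpol hplus
  have hstep : ∀ n, (trajAux P π fair T s₀ n).1 ∉ T →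
      ReachedBy P π (trajAux P π fair T s₀ n).1 →
      PStep P π (trajAux P π fair T s₀ n).1 (trajAux P π fair T s₀ (n+1)).1 ∧
      (trajAux P π fair T s₀ (n+1)).1 ∉ T := by
    intro n hnT hnr
    obtain ⟨a, hπa, hne⟩ := happ _ hnr (fun hg => hnT (hTgoal hg))
    by_cases hfa : fair a
    · rw [g_succ, nxt_fair hπa hfa]
      have hmem := enum_mem hπa hne ((trajAux P π fair T s₀ n).2 (trajAux P π fair T s₀ n).1)
      exact ⟨⟨a, hπa, hmem⟩, hTfair _ a hnT hπa hfa _ hmem⟩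
    · rw [g_succ]
      have hex := hTadv _ a hnT hπa hfa hne
      obtain ⟨hmem, hT⟩ := nxt_adv (T := T) hπa hfa hex _
      exact ⟨⟨a, hπa, hmem⟩, hT⟩
  have hinv : ∀ n, (trajAux P π fair T s₀ n).1 ∉ T ∧
      ReachedBy P π (trajAux P π fair T s₀ n).1 := by
    intro n
    induction n with
    | zero => exact ⟨hs₀, hr₀⟩
    | succ n ih =>
      obtain ⟨hps, hT⟩ := hstep n ih.1 ih.2
      exact ⟨hT, reachedBy_step ih.2 hps⟩
  obtain ⟨τ₀, htraj₀, n₀, hlen₀, hend₀⟩ := hr₀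
  set τ : Traj S :=
    ⟨fun i => if i < n₀ then τ₀.states i else (trajAux P π fair T s₀ (i - n₀)).1, none⟩ with hτ
  have htail : ∀ i, n₀ ≤ i → τ.states i = (trajAux P π fair T s₀ (i - n₀)).1 := by
    intro i hi
    simp [hτ, Nat.not_lt.mpr hi]
  have hpref : ∀ i ≤ n₀, τ.states i = τ₀.states i := by
    intro i hi
    rcases lt_or_eq_of_le hi with h | h
    · simp [hτ, h]
    · subst h
      rw [htail i le_rfl, Nat.sub_self]
      exact hend₀.symm ▸ g_zero
  have htrajτ : IsTraj P π τ := by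
    constructor
    · rw [hpref 0 (Nat.zero_le n₀)]
      exact htraj₀.1
    · intro i _
      by_cases hi : i < n₀
      · have hs := htraj₀.2 i (fun m hm => by rw [hlen₀] at hm; cases hm; exact hi)
        rw [hpref i (le_of_lt hi), hpref (i+1) (by omega)]
        exact hs
      · push_neg at hi
        have h1 : i + 1 - n₀ = (i - n₀) + 1 := by omega
        rw [htail i hi, htail (i+1) (by omega), h1]
        exact (hstep (i - n₀) (hinv _).1 (hinv _).2).1
  have hmaxτ : MaximalTraj P π τ := Or.inl rfl
  have hfairτ : FairPlus P ({({a | fair a}, (∅ : Set A))} : Set (Set A × Set A)) π τ := by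
    intro t hrec hocc a hπa s' hs'
    obtain ⟨c, hc, ⟨a₀, hπa₀, ha₀⟩, -⟩ := hocc
    rw [Set.eq_of_mem_singleton hc] at ha₀
    rw [hπa] at hπa₀
    cases hπa₀
    have hfa : fair a := ha₀
    have hMinf : {m | (trajAux P π fair T s₀ m).1 = t}.Infinite := by
      have h1 : ({i | τ.states i = t} \ {i | i < n₀}).Infinite :=
        hrec.2.diff (Set.finite_lt_nat n₀)
      refine Set.infinite_of_injOn_mapsTo (f := fun i => i - n₀) ?_ ?_ h1
      · intro x hx y hy hxy
        simp only [Set.mem_diff, Set.mem_setOf_eq, not_lt] at hx hy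
        have hxy' : x - n₀ = y - n₀ := hxy
        omega
      · intro i hi
        simp only [Set.mem_diff, Set.mem_setOf_eq, not_lt] at hi
        show (trajAux P π fair T s₀ (i - n₀)).1 = t
        rw [← htail i hi.2]
        exact hi.1
    have hK : {k | enum P π t k = s'}.Infinite := enum_infinite hπa hs'
    classical
    set f : ℕ → ℕ := fun k =>
      if h : ∃ m, (trajAux P π fair T s₀ m).1 = t ∧ (trajAux P π fair T s₀ m).2 t = k
      then h.choose + n₀ else 0 with hf
    have hfspec : ∀ k, ∃ m, (trajAux P π fair T s₀ m).1 = t ∧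
        (trajAux P π fair T s₀ m).2 t = k := fun k => cnt_exact hMinf k
    have hfval : ∀ k, τ.states (f k) = t ∧ τ.states (f k + 1) = s' → True := fun _ _ => trivial
    refine Set.infinite_of_injOn_mapsTo (f := f) ?_ ?_ hK
    · intro x hx y hy hxy
      rw [hf] at hxy
      simp only [dif_pos (hfspec x), dif_pos (hfspec y)] at hxy
      have hx' := (hfspec x).choose_spec
      have hy' := (hfspec y).choose_spec
      have : (hfspec x).choose = (hfspec y).choose := by omega
      rw [← hx'.2, ← hy'.2, this]
    · intro k hk
      have hspec := (hfspec k).choose_spec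
      set m := (hfspec k).choose with hm
      have hfk : f k = m + n₀ := by
        rw [hf]
        simp only [dif_pos (hfspec k)]
        rfl
      constructor
      · show τ.states (f k) = t
        rw [hfk, htail (m + n₀) (by omega)]
        simpa using hspec.1
      · show τ.states (f k + 1) = s'
        rw [hfk, htail (m + n₀ + 1) (by omega)]
        have h2 : m + n₀ + 1 - n₀ = m + 1 := by omega
        rw [h2, g_succ, hspec.1, hspec.2, nxt_fair hπa hfa]
        exact hk
  obtain ⟨i, -, higoal⟩ := hplus τ htrajτ hmaxτ hfairτ
  by_cases hi : i < n₀
  · rw [hpref i (le_of_lt hi)] at higoal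
    exact not_goal_of_hasStep hpol htraj₀ i
      (fun m hm => by rw [hlen₀] at hm; cases hm; exact hi) higoal
  · push_neg at hi
    rw [htail i hi] at higoal
    exact (hinv (i - n₀)).1 (hTgoal higoal)

end Stmt11Aux

namespace Stmt11Aux
open FondPaper Classical

variable {S A : Type}

/-! ### The Dual-FOND termination operator and ranking function -/

def Phd (P : FOND S A) (π : S → Option A) (fair : A → Prop) : Set S → Set S := fun T =>
  P.goal ∪ {s | ∃ a, π s = some a ∧ fair a ∧ ∃ s' ∈ P.F a s, s' ∈ T}
    ∪ {s | ∃ a, π s = some a ∧ ¬ fair a ∧ (P.F a s).Nonempty ∧ P.F a s ⊆ T}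

lemma Phd_mono {P : FOND S A} {π : S → Option A} {fair : A → Prop} {T T' : Set S}
    (h : T ⊆ T') : Phd P π fair T ⊆ Phd P π fair T' := by
  intro s hs
  rcases hs with (hg | ⟨a, ha, hfa, s', hs', hT⟩) | ⟨a, ha, hfa, hne, hsub⟩
  · exact Or.inl (Or.inl hg)
  · exact Or.inl (Or.inr ⟨a, ha, hfa, s', hs', h hT⟩)
  · exact Or.inr ⟨a, ha, hfa, hne, hsub.trans h⟩

lemma Phd_chain (P : FOND S A) (π : S → Option A) (fair : A → Prop) :
    ∀ n, (Phd P π fair)^[n] ∅ ⊆ (Phd P π fair)^[n+1] ∅ := by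
  intro n
  induction n with
  | zero => simp
  | succ n ih =>
    rw [Function.iterate_succ_apply', Function.iterate_succ_apply']
    exact Phd_mono ih

lemma Phd_iter_mono (P : FOND S A) (π : S → Option A) (fair : A → Prop) {i j : ℕ}
    (h : i ≤ j) : (Phd P π fair)^[i] ∅ ⊆ (Phd P π fair)^[j] ∅ := by
  induction j with
  | zero => cases Nat.le_zero.mp h; exact subset_rfl
  | succ j ih =>
    rcases Nat.lt_or_ge i (j+1) with h' | h'
    · exact (ih (by omega)).trans (Phd_chain P π fair j)
    · have : i = j + 1 := by omega
      rw [this]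

lemma Phd_fix_exists [Fintype S] (P : FOND S A) (π : S → Option A) (fair : A → Prop) :
    ∃ k ≤ Fintype.card S, (Phd P π fair)^[k+1] ∅ = (Phd P π fair)^[k] ∅ := by
  by_contra h
  push_neg at h
  have hcard : ∀ m ≤ Fintype.card S + 1, m ≤ ((Phd P π fair)^[m] ∅).ncard := by
    intro m hm
    induction m with
    | zero => omega
    | succ m ih =>
      have hne : (Phd P π fair)^[m] ∅ ≠ (Phd P π fair)^[m+1] ∅ := (h m (by omega)).symm
      have hss : (Phd P π fair)^[m] ∅ ⊂ (Phd P π fair)^[m+1] ∅ :=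
        (Phd_chain P π fair m).ssubset_of_ne hne
      have := Set.ncard_lt_ncard hss (Set.toFinite _)
      have := ih (by omega)
      omega
  have h1 := hcard (Fintype.card S + 1) le_rfl
  have h2 : ((Phd P π fair)^[Fintype.card S + 1] ∅).ncard ≤ Fintype.card S := by
    have := Set.ncard_le_ncard (Set.subset_univ ((Phd P π fair)^[Fintype.card S + 1] ∅))
      (Set.toFinite _)
    rwa [Set.ncard_univ, Nat.card_eq_fintype_card] at this
  omega

lemma backward [Fintype S] {P : FOND S A} {π : S → Option A} {fair : A → Prop}
    (hpol : IsPolicy P π)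
    (hplus : SolvesPlus P ({({a | fair a}, (∅ : Set A))} : Set (Set A × Set A)) π) :
    SolvesDual P fair π := by
  obtain ⟨k, hk, hfixeq⟩ := Phd_fix_exists P π fair
  set T : Set S := (Phd P π fair)^[k] ∅ with hT
  have hfix : Phd P π fair T = T := by
    rw [hT]
    exact (Function.iterate_succ_apply' (Phd P π fair) k ∅).symm.trans hfixeq
  have hTgoal : P.goal ⊆ T := by
    rw [← hfix]
    exact fun s hs => Or.inl (Or.inl hs)
  have hTfair : ∀ s a, s ∉ T → π s = some a → fair a → ∀ s' ∈ P.F a s, s' ∉ T := by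
    intro s a hsT ha hfa s' hs' hs'T
    exact hsT (hfix ▸ Or.inl (Or.inr ⟨a, ha, hfa, s', hs', hs'T⟩))
  have hTadv : ∀ s a, s ∉ T → π s = some a → ¬ fair a → (P.F a s).Nonempty →
      ∃ s' ∈ P.F a s, s' ∉ T := by
    intro s a hsT ha hfa hne
    by_contra hno
    push_neg at hno
    exact hsT (hfix ▸ Or.inr ⟨a, ha, hfa, hne, hno⟩)
  have happ := applicable_of_solvesPlus hpol hplus
  have hreached := reached_in_T hpol hplus hTgoal hTfair hTadv
  -- ranking function
  set d : S → ℕ := fun s => sInf {j | s ∈ (Phd P π fair)^[j] ∅} - 1 with hd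
  have hbasic : ∀ t : S, ∀ j, t ∈ (Phd P π fair)^[j] ∅ →
      1 ≤ sInf {j' | t ∈ (Phd P π fair)^[j'] ∅} ∧
      sInf {j' | t ∈ (Phd P π fair)^[j'] ∅} ≤ j ∧
      t ∈ (Phd P π fair)^[sInf {j' | t ∈ (Phd P π fair)^[j'] ∅}] ∅ := by
    intro t j ht
    have hmem := Nat.sInf_mem (⟨j, ht⟩ : {j' | t ∈ (Phd P π fair)^[j'] ∅}.Nonempty)
    have h1 : sInf {j' | t ∈ (Phd P π fair)^[j'] ∅} ≠ 0 := by
      intro h0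
      rw [h0] at hmem
      exact Set.notMem_empty t hmem
    exact ⟨by omega, Nat.sInf_le ht, hmem⟩
  refine ⟨happ, d, ?_, ?_, ?_⟩
  · -- bound
    intro s hr
    have hsT : s ∈ (Phd P π fair)^[k] ∅ := hreached s hr
    have := (hbasic s k hsT).2.1
    simp only [hd]
    omega
  · -- goal states
    intro s _ hg
    have h1 : s ∈ (Phd P π fair)^[1] ∅ := by
      rw [Function.iterate_one]
      exact Or.inl (Or.inl hg)
    obtain ⟨ha, hb, -⟩ := hbasic s 1 h1
    simp only [hd]
    omega
  · -- decrease
    intro s a hr ha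
    have hsgoal : s ∉ P.goal := by
      intro hg
      rw [hpol s hg] at ha
      exact nomatch ha
    have hsT : s ∈ (Phd P π fair)^[k] ∅ := hreached s hr
    obtain ⟨h1, h2, hmem⟩ := hbasic s k hsT
    set k₀ := sInf {j' | s ∈ (Phd P π fair)^[j'] ∅} with hk₀
    have hk₀2 : 2 ≤ k₀ := by
      rcases Nat.lt_or_ge k₀ 2 with h | h
      · exfalso
        have hk1 : k₀ = 1 := by omega
        rw [hk1, Function.iterate_one] at hmem
        rcases hmem with (hg | ⟨a', -, -, s', hs', hT'⟩) | ⟨a', -, -, hne, hsub⟩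
        · exact hsgoal hg
        · exact Set.notMem_empty s' hT'
        · obtain ⟨s', hs'⟩ := hne
          exact Set.notMem_empty s' (hsub hs')
      · exact h
    obtain ⟨m, hm⟩ : ∃ m, k₀ = m + 2 := ⟨k₀ - 2, by omega⟩
    rw [hm, Function.iterate_succ_apply'] at hmem
    have hds : d s = m + 1 := by simp only [hd]; rw [← hk₀, hm]; omega
    constructor
    · intro hfa
      rcases hmem with (hg | ⟨a', ha', -, s', hs', hT'⟩) | ⟨a', ha', hfa', -, -⟩
      · exact absurd hg hsgoal
      · rw [ha] at ha'; cases ha'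
        refine ⟨s', hs', ?_⟩
        obtain ⟨hc1, hc2, -⟩ := hbasic s' (m+1) hT'
        rw [hds]
        simp only [hd]
        omega
      · rw [ha] at ha'; cases ha'
        exact absurd hfa hfa'
    · intro hfa s' hs'
      rcases hmem with (hg | ⟨a', ha', hfa', -, -⟩) | ⟨a', ha', -, -, hsub⟩
      · exact absurd hg hsgoal
      · rw [ha] at ha'; cases ha'
        exact absurd hfa' hfa
      · rw [ha] at ha'; cases ha'
        have hT' := hsub hs'
        obtain ⟨hc1, hc2, -⟩ := hbasic s' (m+1) hT'
        rw [hds]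
        simp only [hd]
        omega

end Stmt11Aux

open FondPaper

/-- π solves the Dual FOND problem P' (a FOND problem P with actions
labeled fair/adversarial) iff π solves the FOND+ problem ⟨P, {A/∅}⟩ where A is the
set of actions labeled fair. -/
theorem stmt11 (S A : Type) [Fintype S] [Finite A] (P : FOND S A) (hgoal : P.goal.Nonempty)
    (π : S → Option A) (hπ : IsPolicy P π) (fair : A → Prop) :
    SolvesDual P fair π ↔
      SolvesPlus P ({({a | fair a}, (∅ : Set A))} : Set (Set A × Set A)) π :=
  ⟨fun hd => Stmt11Aux.forward hd, fun hp => Stmt11Aux.backward hπ hp⟩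
end
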